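/- arXiv:1808.01830 — 3 statements merged into one kernel-verified Lean document; each statement's English description precedes it below -/
import Mathlib

section
/- Let 0 < p < 1/2, q = 1 − p, and for k ≥ 1 let A_k be the (k+1)×(k+1) strong-reflection matrix. Then for every complex z with |z| < 1 the series G_k(z) = Σ_{n=0}^∞ P(M_n ≤ k) zⁿ converges and equals 1ᵀ (I − z A_k)^{−1} e₀ = det(B_k(z)) / det(I − z A_k), where B_k(z) is the matrix I − z A_k with its first row (index 0) replaced by the all-ones row vector. -/
open Matrix BigOperators

/-- The `(k+1) × (k+1)` strong-reflection matrix over `ℂ`: nonzero entries are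
`A(0,1) = 1-p`, `A(1,0) = 1`, `A(i,i-1) = p` for `2 ≤ i ≤ k`,
`A(i,i+1) = 1-p` for `1 ≤ i ≤ k-1`. -/
noncomputable def strongA (p : ℝ) (k : ℕ) : Matrix (Fin (k + 1)) (Fin (k + 1)) ℂ :=
  fun i j =>
    if (i : ℕ) = 0 ∧ (j : ℕ) = 1 then 1 - (p : ℂ)
    else if (i : ℕ) = 1 ∧ (j : ℕ) = 0 then 1
    else if 2 ≤ (i : ℕ) ∧ (j : ℕ) + 1 = (i : ℕ) then (p : ℂ)
    else if 1 ≤ (i : ℕ) ∧ (j : ℕ) = (i : ℕ) + 1 then 1 - (p : ℂ)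
    else 0

/-- The strongly reflected walk: `S_0 = 0`, `S_{j+1} = |S_j + X_{j+1}|`. -/
def strongS (σ : ℕ → Bool) : ℕ → ℤ
  | 0 => 0
  | j + 1 => |strongS σ j + (if σ j then 1 else -1)|

/-- The maximum `M_n = max_{0 ≤ j ≤ n} S_j` of the strongly reflected walk. -/
def strongM (σ : ℕ → Bool) (n : ℕ) : ℤ :=
  (Finset.range (n + 1)).sup' Finset.nonempty_range_add_one (fun j => strongS σ j)

/-- `P(M_n ≤ k)` for the strongly reflected walk whose i.i.d. steps are `+1` with
probability `p` and `-1` with probability `1 - p`. -/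
noncomputable def strongProbLe (p : ℝ) (n k : ℕ) : ℝ :=
  ∑ σ : Fin n → Bool,
    (∏ i, if σ i then p else 1 - p) *
      (if strongM (fun j => if h : j < n then σ ⟨j, h⟩ else false) n ≤ (k : ℤ) then 1 else 0)

lemma strongS_congr (σ τ : ℕ → Bool) (n : ℕ) (h : ∀ j < n, σ j = τ j) :
    strongS σ n = strongS τ n := by
  induction n with
  | zero => rfl
  | succ n ih =>
    simp only [strongS]
    rw [ih (fun j hj => h j (Nat.lt_succ_of_lt hj)), h n (Nat.lt_succ_self n)]

lemma strongS_nonneg (σ : ℕ → Bool) (n : ℕ) : 0 ≤ strongS σ n := by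
  cases n with
  | zero => exact le_refl 0
  | succ n => exact abs_nonneg _

lemma strongM_le_iff (σ : ℕ → Bool) (n : ℕ) (K : ℤ) :
    strongM σ n ≤ K ↔ ∀ j ≤ n, strongS σ j ≤ K := by
  rw [strongM, Finset.sup'_le_iff]
  constructor
  · intro h j hj; exact h j (Finset.mem_range.2 (Nat.lt_succ_of_le hj))
  · intro h j hj; exact h j (Nat.lt_succ_iff.1 (Finset.mem_range.1 hj))

lemma strongM_succ_le_iff (σ : ℕ → Bool) (n : ℕ) (K : ℤ) :
    strongM σ (n + 1) ≤ K ↔ strongM σ n ≤ K ∧ strongS σ (n + 1) ≤ K := by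
  simp only [strongM_le_iff]
  constructor
  · intro h; exact ⟨fun j hj => h j (Nat.le_succ_of_le hj), h (n+1) le_rfl⟩
  · rintro ⟨h1, h2⟩ j hj
    rcases Nat.lt_succ_iff_lt_or_eq.1 (Nat.lt_succ_of_le hj) with h | h
    · exact h1 j (Nat.lt_succ_iff.1 h)
    · subst h; exact h2

lemma strongS_le_strongM (σ : ℕ → Bool) (n j : ℕ) (hj : j ≤ n) :
    strongS σ j ≤ strongM σ n :=
  Finset.le_sup' _ (Finset.mem_range.2 (Nat.lt_succ_of_le hj))

lemma strongM_congr (σ τ : ℕ → Bool) (n : ℕ) (h : ∀ j < n, σ j = τ j) :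
    strongM σ n = strongM τ n := by
  unfold strongM
  refine Finset.sup'_congr _ rfl (fun j hj => ?_)
  refine strongS_congr _ _ _ (fun j' hj' => h j' ?_)
  have := Finset.mem_range.1 hj; omega

lemma strongM_zero (σ : ℕ → Bool) : strongM σ 0 = 0 := by
  simp [strongM, strongS]

def sext (n : ℕ) (σ : Fin n → Bool) : ℕ → Bool := fun j => if h : j < n then σ ⟨j, h⟩ else false

lemma sext_snoc_lt {n : ℕ} (σ : Fin n → Bool) (b : Bool) (j : ℕ) (hj : j < n) :
    sext (n+1) (Fin.snoc σ b) j = sext n σ j := by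
  simp only [sext]
  rw [dif_pos (Nat.lt_succ_of_lt hj), dif_pos hj]
  have h2 : (⟨j, Nat.lt_succ_of_lt hj⟩ : Fin (n+1)) = Fin.castSucc ⟨j, hj⟩ := rfl
  rw [h2, Fin.snoc_castSucc]

lemma sext_snoc_last {n : ℕ} (σ : Fin n → Bool) (b : Bool) :
    sext (n+1) (Fin.snoc σ b) n = b := by
  simp only [sext]
  rw [dif_pos (Nat.lt_succ_self n)]
  have h2 : (⟨n, Nat.lt_succ_self n⟩ : Fin (n+1)) = Fin.last n := rfl
  rw [h2, Fin.snoc_last]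

lemma strongA_eq (p : ℝ) (k : ℕ) (i j : Fin (k+1)) :
    strongA p k i j = ∑ b : Bool, (if b then (p:ℂ) else 1 - p) *
      (if ((i:ℕ):ℤ) = |((j:ℕ):ℤ) + (if b then 1 else -1)| then 1 else 0) := by
  rw [Fintype.sum_bool]
  simp only [Bool.false_eq_true, if_true, if_false]
  have habs1 : |((j:ℕ):ℤ) + 1| = ((j:ℕ):ℤ) + 1 := abs_of_nonneg (by positivity)
  rw [habs1]
  by_cases hj : (j:ℕ) = 0
  · have habs2 : |((j:ℕ):ℤ) + -1| = 1 := by rw [hj]; norm_num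
    rw [habs2, strongA]
    split_ifs <;> first | ring1 | (exfalso; omega)
  · have habs2 : |((j:ℕ):ℤ) + -1| = ((j:ℕ):ℤ) - 1 := by
      rw [abs_of_nonneg (by omega)]; ring
    rw [habs2, strongA]
    split_ifs <;> first | ring1 | (exfalso; omega)

lemma strongA_diag (p : ℝ) (k : ℕ) (j : Fin (k+1)) : strongA p k j j = 0 := by
  rw [strongA]
  split_ifs <;> first | rfl | (exfalso; omega)

/-- path-sum vector: mass of paths with max ≤ k ending at i -/
noncomputable def pv (p : ℝ) (k n : ℕ) (i : Fin (k+1)) : ℂ :=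
  ∑ σ : Fin n → Bool, (∏ t, if σ t then (p:ℂ) else 1 - p) *
    (if strongM (sext n σ) n ≤ (k:ℤ) ∧ strongS (sext n σ) n = ((i:ℕ):ℤ) then 1 else 0)

lemma pv_zero (p : ℝ) (k : ℕ) (i : Fin (k+1)) :
    pv p k 0 i = if i = 0 then 1 else 0 := by
  rw [pv, Fintype.sum_unique]
  simp only [strongM_zero, strongS, Finset.univ_eq_empty, Finset.prod_empty, one_mul]
  by_cases hi : i = 0
  · subst hi
    rw [if_pos, if_pos rfl]
    exact ⟨by exact_mod_cast Nat.zero_le k, by norm_num⟩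
  · rw [if_neg, if_neg hi]
    rintro ⟨-, h⟩
    exact hi (Fin.ext (by simp only [Fin.val_zero]; omega))

lemma cond_snoc (k n : ℕ) (σ : Fin n → Bool) (b : Bool) (i : Fin (k+1)) :
    (strongM (sext (n+1) (Fin.snoc σ b)) (n+1) ≤ (k:ℤ) ∧
      strongS (sext (n+1) (Fin.snoc σ b)) (n+1) = ((i:ℕ):ℤ))
    ↔ (strongM (sext n σ) n ≤ (k:ℤ) ∧
      |strongS (sext n σ) n + (if b then 1 else -1)| = ((i:ℕ):ℤ)) := by
  have hagree : ∀ j ≤ n, strongS (sext (n+1) (Fin.snoc σ b)) j = strongS (sext n σ) j :=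
    fun j hj => strongS_congr _ _ _ (fun j' hj' => sext_snoc_lt σ b j' (by omega))
  have hM : strongM (sext (n+1) (Fin.snoc σ b)) n = strongM (sext n σ) n :=
    strongM_congr _ _ _ (fun j' hj' => sext_snoc_lt σ b j' hj')
  have hS1 : strongS (sext (n+1) (Fin.snoc σ b)) (n+1)
      = |strongS (sext n σ) n + (if b then 1 else -1)| := by
    show |strongS (sext (n+1) (Fin.snoc σ b)) n + _| = _
    rw [hagree n le_rfl, sext_snoc_last]
  rw [strongM_succ_le_iff, hM, hS1]
  constructor
  · rintro ⟨⟨h1, h2⟩, h3⟩; exact ⟨h1, h3⟩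
  · rintro ⟨h1, h3⟩
    refine ⟨⟨h1, ?_⟩, h3⟩
    rw [h3]
    exact_mod_cast Nat.lt_succ_iff.1 i.isLt

lemma ind_split (k : ℕ) (c : Prop) [Decidable c] (S e : ℤ) (hS0 : 0 ≤ S)
    (hSk : c → S ≤ (k:ℤ)) (i : Fin (k+1)) :
    (if c ∧ |S + e| = ((i:ℕ):ℤ) then (1:ℂ) else 0)
    = ∑ j : Fin (k+1), (if c ∧ S = ((j:ℕ):ℤ) then (1:ℂ) else 0) *
        (if ((i:ℕ):ℤ) = |((j:ℕ):ℤ) + e| then 1 else 0) := by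
  by_cases hc : c
  · have hSk' := hSk hc
    set j₀ : Fin (k+1) := ⟨S.toNat, by omega⟩ with hj₀
    have hj₀v : ((j₀:ℕ):ℤ) = S := by simp [hj₀]; omega
    rw [Finset.sum_eq_single j₀]
    · have h1 : (c ∧ S = ((j₀:ℕ):ℤ)) := ⟨hc, hj₀v.symm⟩
      conv_rhs => rw [if_pos h1]
      rw [one_mul, hj₀v]
      by_cases h : ((i:ℕ):ℤ) = |S + e|
      · rw [if_pos ⟨hc, h.symm⟩, if_pos h]
      · rw [if_neg (fun hh => h hh.2.symm), if_neg h]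
    · intro j _ hj
      rw [if_neg, zero_mul]
      rintro ⟨-, hSj⟩
      exact hj (Fin.ext (by omega))
    · intro h; exact absurd (Finset.mem_univ j₀) h
  · simp [hc]

lemma sum_ind_eq (k : ℕ) (c : Prop) [Decidable c] (S : ℤ) (hS0 : 0 ≤ S)
    (hSk : c → S ≤ (k:ℤ)) :
    ∑ i : Fin (k+1), (if c ∧ S = ((i:ℕ):ℤ) then (1:ℂ) else 0) = if c then 1 else 0 := by
  by_cases hc : c
  · have hSk' := hSk hc
    set i₀ : Fin (k+1) := ⟨S.toNat, by omega⟩ with hi₀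
    have hi₀v : ((i₀:ℕ):ℤ) = S := by simp [hi₀]; omega
    rw [Finset.sum_eq_single i₀]
    · rw [if_pos ⟨hc, hi₀v.symm⟩, if_pos hc]
    · intro j _ hj
      rw [if_neg]
      rintro ⟨-, hSj⟩
      exact hj (Fin.ext (by omega))
    · intro h; exact absurd (Finset.mem_univ i₀) h
  · simp [hc]

lemma pv_succ (p : ℝ) (k n : ℕ) : pv p k (n+1) = (strongA p k).mulVec (pv p k n) := by
  funext i
  have key : ∀ (b : Bool) (σ : Fin n → Bool),
      (∏ t : Fin (n+1), if (Fin.snoc σ b : Fin (n+1) → Bool) t then (p:ℂ) else 1-p) *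
        (if strongM (sext (n+1) (Fin.snoc σ b)) (n+1) ≤ (k:ℤ) ∧
            strongS (sext (n+1) (Fin.snoc σ b)) (n+1) = ((i:ℕ):ℤ) then 1 else 0)
      = ∑ j : Fin (k+1),
          ((∏ t : Fin n, if σ t then (p:ℂ) else 1-p) *
            (if strongM (sext n σ) n ≤ (k:ℤ) ∧ strongS (sext n σ) n = ((j:ℕ):ℤ)
              then 1 else 0)) *
          ((if b then (p:ℂ) else 1-p) *
            (if ((i:ℕ):ℤ) = |((j:ℕ):ℤ) + (if b then 1 else -1)| then 1 else 0)) := by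
    intro b σ
    rw [Fin.prod_univ_castSucc]
    simp only [Fin.snoc_castSucc, Fin.snoc_last]
    rw [if_congr (cond_snoc k n σ b i) rfl rfl]
    rw [ind_split k _ _ _ (strongS_nonneg _ n)
      (fun hc => le_trans (strongS_le_strongM _ n n le_rfl) hc) i]
    rw [Finset.mul_sum]
    exact Finset.sum_congr rfl (fun j _ => by ring)
  have hsnoc : ∀ (b : Bool) (σ : Fin n → Bool),
      (⇑(Fin.snocEquiv (fun _ : Fin (n+1) => Bool)) (b, σ)) = Fin.snoc σ b := fun b σ => rfl
  rw [pv, ← Equiv.sum_comp (Fin.snocEquiv (fun _ : Fin (n+1) => Bool)), Fintype.sum_prod_type]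
  simp only [hsnoc, key]
  rw [show ((strongA p k).mulVec (pv p k n)) i = ∑ j, strongA p k i j * pv p k n j from rfl]
  simp only [strongA_eq, pv, Finset.sum_mul, Finset.mul_sum]
  rw [Finset.sum_comm]
  rw [Finset.sum_congr rfl (fun (σ : Fin n → Bool) _ => Finset.sum_comm (s := Finset.univ)
    (t := Finset.univ) (f := fun (b : Bool) (j : Fin (k+1)) =>
      ((∏ t : Fin n, if σ t then (p:ℂ) else 1-p) *
        (if strongM (sext n σ) n ≤ (k:ℤ) ∧ strongS (sext n σ) n = ((j:ℕ):ℤ)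
          then 1 else 0)) *
      ((if b then (p:ℂ) else 1-p) *
        (if ((i:ℕ):ℤ) = |((j:ℕ):ℤ) + (if b then 1 else -1)| then 1 else 0))))]
  rw [Finset.sum_comm]
  apply Finset.sum_congr rfl
  intro j _
  apply Finset.sum_congr rfl
  intro σ _
  apply Finset.sum_congr rfl
  intro b _
  ring

noncomputable def e0 (k : ℕ) : Fin (k+1) → ℂ := fun i => if i = 0 then 1 else 0

lemma pv_pow (p : ℝ) (k n : ℕ) : pv p k n = ((strongA p k)^n).mulVec (e0 k) := by
  induction n with
  | zero =>
    funext i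
    rw [pow_zero, Matrix.one_mulVec, pv_zero]; rfl
  | succ n ih =>
    rw [pv_succ, ih, Matrix.mulVec_mulVec, ← pow_succ']

lemma probLe_eq_sum_pv (p : ℝ) (n k : ℕ) :
    (strongProbLe p n k : ℂ) = ∑ i : Fin (k+1), pv p k n i := by
  rw [strongProbLe]
  push_cast [apply_ite (fun x : ℝ => (x : ℂ))]
  simp only [pv]
  conv_rhs => rw [Finset.sum_comm]
  apply Finset.sum_congr rfl
  intro σ _
  rw [← Finset.mul_sum]
  rw [sum_ind_eq k _ _ (strongS_nonneg _ n)
    (fun hc => le_trans (strongS_le_strongM _ n n le_rfl) hc)]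
  rfl

lemma sum_ind_le_one (k : ℕ) (c : ℤ) :
    ∑ i : Fin (k+1), (if ((i:ℕ):ℤ) = c then (1:ℝ) else 0) ≤ 1 := by
  by_cases h : ∃ i₀ : Fin (k+1), ((i₀:ℕ):ℤ) = c
  · obtain ⟨i₀, hi₀⟩ := h
    rw [Finset.sum_eq_single i₀]
    · rw [if_pos hi₀]
    · intro j _ hj
      rw [if_neg]
      intro hjc
      exact hj (Fin.ext (by omega))
    · intro h; exact absurd (Finset.mem_univ i₀) h
  · push_neg at h
    rw [Finset.sum_eq_zero (fun i _ => if_neg (h i))]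
    norm_num

lemma norm_w (p : ℝ) (hp0 : 0 ≤ p) (hp1 : p ≤ 1) (b : Bool) :
    ‖(if b then (p:ℂ) else 1 - p)‖ = (if b then p else 1 - p) := by
  cases b
  · simp only [Bool.false_eq_true, if_false]
    rw [show (1:ℂ) - p = ((1-p:ℝ):ℂ) by push_cast; ring, Complex.norm_real]
    exact abs_of_nonneg (by linarith)
  · simp only [if_true]
    rw [Complex.norm_real]
    exact abs_of_nonneg hp0

lemma colsum (p : ℝ) (hp0 : 0 ≤ p) (hp1 : p ≤ 1) (k : ℕ) (j : Fin (k+1)) :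
    ∑ i : Fin (k+1), ‖strongA p k i j‖ ≤ 1 := by
  have step : ∀ i : Fin (k+1), ‖strongA p k i j‖ ≤
      ∑ b : Bool, (if b then p else 1 - p) *
        (if ((i:ℕ):ℤ) = |((j:ℕ):ℤ) + (if b then 1 else -1)| then (1:ℝ) else 0) := by
    intro i
    rw [strongA_eq]
    refine le_trans (norm_sum_le _ _) (le_of_eq (Finset.sum_congr rfl (fun b _ => ?_)))
    rw [norm_mul, norm_w p hp0 hp1]
    congr 1
    split_ifs <;> simp
  refine le_trans (Finset.sum_le_sum (fun i _ => step i)) ?_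
  rw [Finset.sum_comm]
  have : ∀ b : Bool, ∑ i : Fin (k+1), (if b then p else 1 - p) *
      (if ((i:ℕ):ℤ) = |((j:ℕ):ℤ) + (if b then 1 else -1)| then (1:ℝ) else 0)
      ≤ (if b then p else 1 - p) := by
    intro b
    rw [← Finset.mul_sum]
    have hw : (0:ℝ) ≤ (if b then p else 1 - p) := by cases b <;> simp <;> linarith
    calc (if b then p else 1-p) * ∑ i : Fin (k+1),
          (if ((i:ℕ):ℤ) = |((j:ℕ):ℤ) + (if b then 1 else -1)| then (1:ℝ) else 0)
        ≤ (if b then p else 1-p) * 1 :=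
          mul_le_mul_of_nonneg_left (sum_ind_le_one k _) hw
      _ = _ := mul_one _
  refine le_trans (Finset.sum_le_sum (fun b _ => this b)) ?_
  rw [Fintype.sum_bool]
  norm_num

lemma pv_total (p : ℝ) (hp0 : 0 ≤ p) (hp1 : p ≤ 1) (k : ℕ) :
    ∀ n, ∑ i : Fin (k+1), ‖pv p k n i‖ ≤ 1 := by
  intro n
  induction n with
  | zero =>
    simp only [pv_zero]
    have : ∀ i : Fin (k+1), ‖if i = 0 then (1:ℂ) else 0‖ = if i = 0 then (1:ℝ) else 0 := by
      intro i; split_ifs <;> simp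
    rw [Finset.sum_congr rfl (fun i _ => this i), Finset.sum_ite_eq' Finset.univ 0 (fun _ => (1:ℝ))]
    simp
  | succ n ih =>
    rw [pv_succ]
    have step : ∀ i : Fin (k+1), ‖((strongA p k).mulVec (pv p k n)) i‖ ≤
        ∑ j : Fin (k+1), ‖strongA p k i j‖ * ‖pv p k n j‖ := by
      intro i
      rw [show ((strongA p k).mulVec (pv p k n)) i = ∑ j, strongA p k i j * pv p k n j from rfl]
      refine le_trans (norm_sum_le _ _) (le_of_eq (Finset.sum_congr rfl (fun j _ => norm_mul _ _)))
    refine le_trans (Finset.sum_le_sum (fun i _ => step i)) ?_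
    rw [Finset.sum_comm]
    refine le_trans (Finset.sum_le_sum (fun j _ => ?_)) ih
    rw [← Finset.sum_mul]
    calc (∑ i : Fin (k+1), ‖strongA p k i j‖) * ‖pv p k n j‖
        ≤ 1 * ‖pv p k n j‖ :=
          mul_le_mul_of_nonneg_right (colsum p hp0 hp1 k j) (norm_nonneg _)
      _ = ‖pv p k n j‖ := one_mul _

lemma pv_le_one (p : ℝ) (hp0 : 0 ≤ p) (hp1 : p ≤ 1) (k n : ℕ) (i : Fin (k+1)) :
    ‖pv p k n i‖ ≤ 1 :=
  le_trans (Finset.single_le_sum (f := fun i => ‖pv p k n i‖)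
    (fun _ _ => norm_nonneg _) (Finset.mem_univ i)) (pv_total p hp0 hp1 k n)

lemma det_updateRow_univ_sum {l : Type*} [Fintype l] [DecidableEq l]
    (M : Matrix l l ℂ) (r : l) {κ : Type*} (s : Finset κ) (v : κ → l → ℂ) :
    (M.updateRow r (∑ x ∈ s, v x)).det = ∑ x ∈ s, (M.updateRow r (v x)).det := by
  classical
  induction s using Finset.induction_on with
  | empty =>
    rw [Finset.sum_empty, Finset.sum_empty]
    exact Matrix.det_eq_zero_of_row_eq_zero r (fun j => by simp)
  | @insert x s hx ih =>
    rw [Finset.sum_insert hx, Finset.sum_insert hx, Matrix.det_updateRow_add, ih]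

section main
variable (p : ℝ) (k : ℕ) (z : ℂ)

lemma main_lemma (hp0 : 0 ≤ p) (hp1 : p ≤ 1) (hz : ‖z‖ < 1) :
    HasSum (fun n : ℕ => (strongProbLe p n k : ℂ) * z ^ n)
      ((fun _ : Fin (k + 1) => (1 : ℂ)) ⬝ᵥ
        (1 - z • strongA p k)⁻¹.mulVec (e0 k)) := by
  set A := strongA p k with hA
  set M := 1 - z • A with hM
  -- summability
  have hsum : ∀ i : Fin (k+1), Summable (fun n => pv p k n i * z ^ n) := by
    intro i
    refine Summable.of_norm_bounded
      (summable_geometric_of_lt_one (norm_nonneg z) hz) (fun n => ?_)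
    rw [norm_mul, norm_pow]
    calc ‖pv p k n i‖ * ‖z‖ ^ n ≤ 1 * ‖z‖ ^ n :=
          mul_le_mul_of_nonneg_right (pv_le_one p hp0 hp1 k n i) (by positivity)
      _ = ‖z‖ ^ n := one_mul _
  set g : Fin (k+1) → ℂ := fun i => ∑' n, pv p k n i * z ^ n with hg
  have hgs : ∀ i, HasSum (fun n => pv p k n i * z ^ n) (g i) := fun i => (hsum i).hasSum
  -- the recursion identity
  have key : ∀ i, z * (A.mulVec g) i = g i - e0 k i := by
    intro i
    have H1 : HasSum (fun n => pv p k (n+1) i * z ^ n) ((A.mulVec g) i) := by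
      have := hasSum_sum (s := Finset.univ)
        (f := fun (j : Fin (k+1)) (n : ℕ) => A i j * (pv p k n j * z ^ n))
        (a := fun j => A i j * g j) (fun j _ => (hgs j).mul_left (A i j))
      have heq : (fun n => ∑ j : Fin (k+1), A i j * (pv p k n j * z ^ n))
          = fun n => pv p k (n+1) i * z ^ n := by
        funext n
        rw [pv_succ]
        rw [show ((A).mulVec (pv p k n)) i = ∑ j, A i j * pv p k n j from rfl,
          Finset.sum_mul]
        exact Finset.sum_congr rfl (fun j _ => by ring)
      rw [heq] at this
      convert this using 1
      rfl
    have H2 : HasSum (fun n => pv p k (n+1) i * z ^ (n+1))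
        ((g i - ∑ m ∈ Finset.range 1, pv p k m i * z ^ m) + ∑ m ∈ Finset.range 1, pv p k m i * z ^ m)
        → True := fun _ => trivial
    have H3 : HasSum (fun n => pv p k (n+1) i * z ^ (n+1)) (g i - pv p k 0 i * z ^ 0) := by
      rw [hasSum_nat_add_iff (f := fun n => pv p k n i * z ^ n) 1]
      rw [Finset.range_one, Finset.sum_singleton]
      rw [sub_add_cancel]
      exact hgs i
    have H4 : HasSum (fun n => pv p k (n+1) i * z ^ (n+1)) (z * (A.mulVec g) i) := by
      have := H1.mul_left z
      have hf : (fun n => pv p k (n+1) i * z ^ (n+1)) = fun n => z * (pv p k (n+1) i * z ^ n) := by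
        funext n; ring
      rw [hf]; exact this
    have := H4.unique H3
    rw [this, pv_zero, pow_zero, mul_one]
    rfl
  -- M.mulVec g = e0
  have hMg : M.mulVec g = e0 k := by
    funext i
    rw [hM, Matrix.sub_mulVec, Matrix.one_mulVec, Matrix.smul_mulVec]
    have : (z • A.mulVec g) i = z * (A.mulVec g) i := rfl
    rw [Pi.sub_apply, this, key i]
    ring
  -- invertibility
  have hdet : M.det ≠ 0 := by
    apply det_ne_zero_of_sum_col_lt_diag
    intro j
    have hdiag : M j j = 1 := by
      rw [hM]
      simp only [Matrix.sub_apply, Matrix.smul_apply, Matrix.one_apply_eq, smul_eq_mul]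
      show 1 - z * strongA p k j j = 1
      rw [strongA_diag]
      ring
    have hoff : ∀ i, i ≠ j → ‖M i j‖ = ‖z‖ * ‖A i j‖ := by
      intro i hij
      rw [hM]
      simp only [Matrix.sub_apply, Matrix.smul_apply, smul_eq_mul,
        Matrix.one_apply_ne hij]
      rw [zero_sub, norm_neg, norm_mul]
    rw [hdiag, norm_one]
    calc ∑ i ∈ Finset.univ.erase j, ‖M i j‖
        = ∑ i ∈ Finset.univ.erase j, ‖z‖ * ‖A i j‖ :=
          Finset.sum_congr rfl (fun i hi => hoff i (Finset.ne_of_mem_erase hi))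
      _ ≤ ∑ i : Fin (k+1), ‖z‖ * ‖A i j‖ :=
          Finset.sum_le_sum_of_subset_of_nonneg (Finset.erase_subset _ _)
            (fun i _ _ => by positivity)
      _ = ‖z‖ * ∑ i : Fin (k+1), ‖A i j‖ := by rw [Finset.mul_sum]
      _ ≤ ‖z‖ * 1 := mul_le_mul_of_nonneg_left (colsum p hp0 hp1 k j) (norm_nonneg z)
      _ = ‖z‖ := mul_one _
      _ < 1 := hz
  -- g = M⁻¹ e0
  have hginv : M⁻¹.mulVec (e0 k) = g := by
    rw [← hMg, Matrix.mulVec_mulVec, Matrix.nonsing_inv_mul M (isUnit_iff_ne_zero.2 hdet),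
      Matrix.one_mulVec]
  -- conclusion
  have hdot : (fun _ : Fin (k + 1) => (1 : ℂ)) ⬝ᵥ M⁻¹.mulVec (e0 k) = ∑ i, g i := by
    rw [hginv]
    simp [dotProduct]
  rw [hdot]
  have := hasSum_sum (s := Finset.univ)
    (f := fun (i : Fin (k+1)) (n : ℕ) => pv p k n i * z ^ n)
    (a := g) (fun i _ => hgs i)
  have heq : (fun n => ∑ i : Fin (k+1), pv p k n i * z ^ n)
      = fun n => (strongProbLe p n k : ℂ) * z ^ n := by
    funext n
    rw [probLe_eq_sum_pv, Finset.sum_mul]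
  rwa [heq] at this

lemma cramer_part (hdet : (1 - z • strongA p k).det ≠ 0) :
    (fun _ : Fin (k + 1) => (1 : ℂ)) ⬝ᵥ
        (1 - z • strongA p k)⁻¹.mulVec (e0 k) =
      ((1 - z • strongA p k).updateRow 0 (fun _ => 1)).det / (1 - z • strongA p k).det := by
  set M := 1 - z • strongA p k with hM
  have h1 : M⁻¹.mulVec (e0 k) = fun i => M⁻¹ i 0 := by
    funext i
    rw [show (M⁻¹.mulVec (e0 k)) i = ∑ j, M⁻¹ i j * e0 k j from rfl]
    simp only [e0, mul_ite, mul_one, mul_zero]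
    rw [Finset.sum_ite_eq' Finset.univ 0 (fun j => M⁻¹ i j)]
    simp
  have hones : (∑ x : Fin (k+1), Pi.single x (1:ℂ)) = fun _ => (1:ℂ) := by
    funext j
    rw [Finset.sum_apply]
    simp only [Pi.single_apply]
    rw [Finset.sum_ite_eq Finset.univ j (fun _ => (1:ℂ))]
    simp
  have hadj : ∑ i : Fin (k+1), M.adjugate i 0 = (M.updateRow 0 (fun _ => 1)).det := by
    calc ∑ i : Fin (k+1), M.adjugate i 0
        = ∑ i : Fin (k+1), (M.updateRow 0 (Pi.single i 1)).det :=
          Finset.sum_congr rfl (fun i _ => Matrix.adjugate_apply M i 0)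
      _ = (M.updateRow 0 (∑ i : Fin (k+1), Pi.single i (1:ℂ))).det :=
          (det_updateRow_univ_sum M 0 Finset.univ _).symm
      _ = _ := by rw [hones]
  rw [h1]
  have h2 : (fun _ : Fin (k + 1) => (1 : ℂ)) ⬝ᵥ (fun i => M⁻¹ i 0) = ∑ i, M⁻¹ i 0 := by
    simp [dotProduct]
  rw [h2]
  have h3 : ∀ i, M⁻¹ i 0 = (M.det)⁻¹ * M.adjugate i 0 := by
    intro i
    rw [Matrix.inv_def, Ring.inverse_eq_inv]
    rfl
  rw [Finset.sum_congr rfl (fun i _ => h3 i), ← Finset.mul_sum, hadj]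
  field_simp

end main

lemma det_ne (p : ℝ) (k : ℕ) (z : ℂ) (hp0 : 0 ≤ p) (hp1 : p ≤ 1) (hz : ‖z‖ < 1) :
    (1 - z • strongA p k).det ≠ 0 := by
  set A := strongA p k with hA
  set M := 1 - z • A with hM
  apply det_ne_zero_of_sum_col_lt_diag
  intro j
  have hdiag : M j j = 1 := by
    rw [hM]
    simp only [Matrix.sub_apply, Matrix.smul_apply, Matrix.one_apply_eq, smul_eq_mul]
    show 1 - z * strongA p k j j = 1
    rw [strongA_diag]
    ring
  have hoff : ∀ i, i ≠ j → ‖M i j‖ = ‖z‖ * ‖A i j‖ := by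
    intro i hij
    rw [hM]
    simp only [Matrix.sub_apply, Matrix.smul_apply, smul_eq_mul, Matrix.one_apply_ne hij]
    rw [zero_sub, norm_neg, norm_mul]
  rw [hdiag, norm_one]
  calc ∑ i ∈ Finset.univ.erase j, ‖M i j‖
      = ∑ i ∈ Finset.univ.erase j, ‖z‖ * ‖A i j‖ :=
        Finset.sum_congr rfl (fun i hi => hoff i (Finset.ne_of_mem_erase hi))
    _ ≤ ∑ i : Fin (k+1), ‖z‖ * ‖A i j‖ :=
        Finset.sum_le_sum_of_subset_of_nonneg (Finset.erase_subset _ _)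
          (fun i _ _ => by positivity)
    _ = ‖z‖ * ∑ i : Fin (k+1), ‖A i j‖ := by rw [Finset.mul_sum]
    _ ≤ ‖z‖ * 1 := mul_le_mul_of_nonneg_left (colsum p hp0 hp1 k j) (norm_nonneg z)
    _ = ‖z‖ := mul_one _
    _ < 1 := hz

/-- For `|z| < 1`, the generating function `G_k(z) = Σ_n P(M_n ≤ k) zⁿ` converges to
`1ᵀ (I - z A_k)⁻¹ e₀`, which equals `det B_k(z) / det (I - z A_k)`, where `B_k(z)` is
`I - z A_k` with its first row replaced by the all-ones row. -/
theorem strong_generating_function (p q : ℝ) (hp0 : 0 < p) (hp : p < 1 / 2)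
    (hq : q = 1 - p) (k : ℕ) (hk : 1 ≤ k) (z : ℂ) (hz : ‖z‖ < 1) :
    HasSum (fun n : ℕ => (strongProbLe p n k : ℂ) * z ^ n)
      ((fun _ : Fin (k + 1) => (1 : ℂ)) ⬝ᵥ
        (1 - z • strongA p k)⁻¹.mulVec (fun i => if i = 0 then 1 else 0)) ∧
    (fun _ : Fin (k + 1) => (1 : ℂ)) ⬝ᵥ
        (1 - z • strongA p k)⁻¹.mulVec (fun i => if i = 0 then 1 else 0) =
      ((1 - z • strongA p k).updateRow 0 (fun _ => 1)).det / (1 - z • strongA p k).det := by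
  have hp1 : p ≤ 1 := by linarith
  have hp0' : 0 ≤ p := le_of_lt hp0
  have hz' : ‖z‖ < 1 := hz
  have he : e0 k = (fun i : Fin (k+1) => if i = 0 then (1:ℂ) else 0) := rfl
  constructor
  · have := main_lemma p k z hp0' hp1 hz'
    rwa [he] at this
  · have := cramer_part p k z (det_ne p k z hp0' hp1 hz')
    rwa [he] at this
end

section
/- Let 0 < p < 1/2 and q = 1 − p. Let R_k(z) be the polynomials defined by R_0(z) = 1, R_1(z) = 1 − q z², and R_k(z) = R_{k−1}(z) − p q z² R_{k−2}(z) for k ≥ 2. Then for every real z with 0 < z < 1/(2√(pq)), setting t = √(1 − 4 p q z²), u = ((1+t)/(2p))(−1 + 2p + t) and v = ((1−t)/(2p))(1 − 2p + t), one has for all k ≥ 0: R_k(z) = (1/(2t)) [ u ((1+t)/2)^k + v ((1−t)/2)^k ]. -/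
/-- The polynomials `R_k` for the strong scenario:
`R_0(z) = 1`, `R_1(z) = 1 - (1-p) z²`, `R_k(z) = R_{k-1}(z) - p (1-p) z² R_{k-2}(z)`. -/
noncomputable def Rrec (p z : ℝ) : ℕ → ℝ
  | 0 => 1
  | 1 => 1 - (1 - p) * z ^ 2
  | (k + 2) => Rrec p z (k + 1) - p * (1 - p) * z ^ 2 * Rrec p z k

/-- Explicit solution of the strong-scenario recurrence: with
`t = √(1 - 4 p q z²)`, `u = ((1+t)/(2p))(-1+2p+t)`, `v = ((1-t)/(2p))(1-2p+t)`,
`R_k(z) = (1/(2t)) [u ((1+t)/2)^k + v ((1-t)/2)^k]` for all `k ≥ 0`. -/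
theorem strong_R_closed_form (p q : ℝ) (hp0 : 0 < p) (hp : p < 1 / 2) (hq : q = 1 - p)
    (z : ℝ) (hz0 : 0 < z) (hz1 : z < 1 / (2 * Real.sqrt (p * q)))
    (t u v : ℝ) (ht : t = Real.sqrt (1 - 4 * p * q * z ^ 2))
    (hu : u = (1 + t) / (2 * p) * (-1 + 2 * p + t))
    (hv : v = (1 - t) / (2 * p) * (1 - 2 * p + t)) :
    ∀ k : ℕ,
      Rrec p z k = 1 / (2 * t) * (u * ((1 + t) / 2) ^ k + v * ((1 - t) / 2) ^ k) := by
  have hq0 : 0 < q := by rw [hq]; linarith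
  have hpq : 0 < p * q := mul_pos hp0 hq0
  have hs : 0 < Real.sqrt (p * q) := Real.sqrt_pos.mpr hpq
  have hzlt : 4 * p * q * z ^ 2 < 1 := by
    have h1 : z * (2 * Real.sqrt (p * q)) < 1 := by
      rw [lt_div_iff₀ (by positivity)] at hz1; exact hz1
    have h2 : (z * (2 * Real.sqrt (p * q))) ^ 2 < 1 := by
      nlinarith [mul_pos hz0 (by positivity : (0:ℝ) < 2 * Real.sqrt (p * q))]
    have h3 : Real.sqrt (p * q) ^ 2 = p * q := Real.sq_sqrt hpq.le
    nlinarith [h3]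
  have ht0 : 0 < t := by rw [ht]; exact Real.sqrt_pos.mpr (by linarith)
  have ht2 : t ^ 2 = 1 - 4 * p * q * z ^ 2 := by
    rw [ht]; exact Real.sq_sqrt (by linarith)
  subst hq hu hv
  have hpne : p ≠ 0 := ne_of_gt hp0
  have htne : t ≠ 0 := ne_of_gt ht0
  intro k
  induction k using Nat.twoStepInduction with
  | zero => simp only [Rrec, pow_zero]; field_simp; ring
  | one =>
    simp only [Rrec, pow_one]; field_simp
    linear_combination (-2 * t) * ht2
  | more k ih1 ih2 =>
    show Rrec p z (k + 1) - p * (1 - p) * z ^ 2 * Rrec p z k = _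
    rw [ih1, ih2]
    have e : ∀ s : ℝ, s ^ 2 = 1 - 4 * p * (1 - p) * z ^ 2 →
        ((1 + s) / 2) ^ (k + 2) = ((1 + s) / 2) ^ (k + 1)
          - p * (1 - p) * z ^ 2 * ((1 + s) / 2) ^ k := by
      intro s hs2
      have : ((1 + s) / 2) ^ (k + 2) = ((1 + s) / 2) ^ k * ((1 + s) / 2) ^ 2 := by ring
      rw [this]
      have h2 : ((1 + s) / 2) ^ 2 = (1 + s) / 2 - p * (1 - p) * z ^ 2 := by
        field_simp; linear_combination 1 * hs2
      rw [h2]; ring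
    have e1 := e t ht2
    have e2 : ((1 - t) / 2) ^ (k + 2) = ((1 - t) / 2) ^ (k + 1)
        - p * (1 - p) * z ^ 2 * ((1 - t) / 2) ^ k := by
      have := e (-t) (by linear_combination ht2)
      simpa [sub_eq_add_neg] using this
    rw [e1, e2]; ring
end

section
/- Let 0 < p < 1/2 and q = 1 − p. There exists K such that for every integer k ≥ K, the equation ((1+t)/(1−t))^{k+1} = (1 − 2p + t)/(1 − 2p − t) has exactly one complex solution t with positive real part (and t ≠ 1, t ≠ 1 − 2p); moreover this solution t_k is real and satisfies 0 < t_k < 1. -/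
open Real

section Auxiliary

lemma arctan_lip (x y : ℝ) : |arctan y - arctan x| ≤ |y - x| := by
  have h : LipschitzWith 1 arctan := by
    apply lipschitzWith_of_nnnorm_deriv_le Real.differentiable_arctan
    intro x
    rw [Real.deriv_arctan]
    rw [← NNReal.coe_le_coe]
    have h1 : (0:ℝ) < 1 + x ^ 2 := by positivity
    rw [coe_nnnorm, Real.norm_eq_abs, abs_of_nonneg (by positivity)]
    simp only []
    rw [NNReal.coe_one, div_le_one h1]
    nlinarith
  have := h.dist_le_mul y x
  simpa [Real.dist_eq] using this

lemma sin_lip (x y : ℝ) : |Real.sin y - Real.sin x| ≤ |y - x| := by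
  rw [Real.sin_sub_sin]
  calc |2 * Real.sin ((y - x)/2) * Real.cos ((y+x)/2)|
      = 2 * |Real.sin ((y-x)/2)| * |Real.cos ((y+x)/2)| := by
        rw [abs_mul, abs_mul]; norm_num
    _ ≤ 2 * |(y-x)/2| * 1 := by
        have h1 := Real.abs_sin_le_abs (x := (y-x)/2)
        have h2 := Real.abs_cos_le_one ((y+x)/2)
        have h3 : (0:ℝ) ≤ |Real.sin ((y-x)/2)| := abs_nonneg _
        nlinarith [abs_nonneg ((y-x)/2)]
    _ = |y - x| := by rw [abs_div, abs_two]; ring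

lemma den_pos {b : ℝ} (hb0 : 0 < b) (hb1 : b < 1) (x : ℝ) : 1 - b ≤ 1 - b * Real.cos x := by
  have := Real.cos_le_one x
  nlinarith
lemma h_lip {b : ℝ} (hb0 : 0 < b) (hb1 : b < 1) (x y : ℝ) :
    |arctan (b * Real.sin y / (1 - b * Real.cos y)) - arctan (b * Real.sin x / (1 - b * Real.cos x))|
      ≤ (b * (1 + b) / (1 - b) ^ 2) * |y - x| := by
  have hb1' : (0:ℝ) < 1 - b := by linarith
  have hdx : (0:ℝ) < 1 - b * Real.cos x := lt_of_lt_of_le hb1' (den_pos hb0 hb1 x)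
  have hdy : (0:ℝ) < 1 - b * Real.cos y := lt_of_lt_of_le hb1' (den_pos hb0 hb1 y)
  refine le_trans (arctan_lip _ _) ?_
  have key : b * Real.sin y / (1 - b * Real.cos y) - b * Real.sin x / (1 - b * Real.cos x)
      = b * ((Real.sin y - Real.sin x) - b * Real.sin (y - x))
        / ((1 - b * Real.cos y) * (1 - b * Real.cos x)) := by
    rw [Real.sin_sub]
    field_simp
    ring
  rw [key, abs_div, abs_mul]
  have h1 : |Real.sin y - Real.sin x - b * Real.sin (y - x)| ≤ (1 + b) * |y - x| := by
    have h2 := sin_lip x y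
    have h3 : |b * Real.sin (y - x)| ≤ b * |y - x| := by
      rw [abs_mul, abs_of_nonneg hb0.le]
      have := Real.abs_sin_le_abs (x := y - x)
      nlinarith
    calc |Real.sin y - Real.sin x - b * Real.sin (y - x)|
        ≤ |Real.sin y - Real.sin x| + |b * Real.sin (y - x)| := abs_sub _ _
      _ ≤ |y - x| + b * |y - x| := add_le_add h2 h3
      _ = (1 + b) * |y - x| := by ring
  have hden : (1 - b)^2 ≤ |(1 - b * Real.cos y) * (1 - b * Real.cos x)| := by
    rw [abs_of_nonneg (by positivity)]
    have := den_pos hb0 hb1 x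
    have := den_pos hb0 hb1 y
    nlinarith
  rw [abs_of_nonneg hb0.le]
  rw [div_le_iff₀ (by positivity)]
  have hnn : (0:ℝ) ≤ b * (1+b) / (1-b)^2 * |y-x| := by positivity
  calc b * |Real.sin y - Real.sin x - b * Real.sin (y - x)| ≤ b * ((1+b) * |y-x|) := by
        nlinarith
    _ = (b * (1+b) / (1-b)^2 * |y-x|) * (1-b)^2 := by field_simp
    _ ≤ b * (1 + b) / (1 - b) ^ 2 * |y - x| * |(1 - b * Real.cos y) * (1 - b * Real.cos x)| := by
        gcongr

lemma exp_real_form (c : ℝ) :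
    Complex.exp ((c:ℂ)*Complex.I) = ((Real.cos c : ℝ):ℂ) + ((Real.sin c : ℝ):ℂ)*Complex.I := by
  rw [Complex.exp_mul_I]
  push_cast
  ring

lemma circle_root {b : ℝ} (hb0 : 0 < b) (hb1 : b < 1) (k : ℕ) (θ : ℝ) (m : ℤ)
    (hg : (k:ℝ)*θ - 2*Real.arctan (b*Real.sin θ/(1-b*Real.cos θ)) = 2*π*m) :
    (b:ℂ) * (Complex.exp ((θ:ℂ)*Complex.I))^(k+2) - (Complex.exp ((θ:ℂ)*Complex.I))^(k+1)
      + Complex.exp ((θ:ℂ)*Complex.I) - (b:ℂ) = 0 := by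
  have hd : (0:ℝ) < 1 - b*Real.cos θ := by nlinarith [Real.cos_le_one θ]
  set s : ℝ := b*Real.sin θ/(1-b*Real.cos θ) with hs
  set φ : ℝ := Real.arctan s with hφ
  set r : ℝ := (1-b*Real.cos θ)*Real.sqrt (1+s^2) with hr
  have hsq : (0:ℝ) < Real.sqrt (1+s^2) := Real.sqrt_pos.mpr (by positivity)
  have hrc : r * Real.cos φ = 1 - b*Real.cos θ := by
    rw [hφ, Real.cos_arctan, hr]; field_simp
  have hrs : r * Real.sin φ = b*Real.sin θ := by
    rw [hφ, Real.sin_arctan, hr]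
    have : (1 - b*Real.cos θ) * s = b * Real.sin θ := by
      rw [hs]; field_simp
    field_simp
    nlinarith [this]
  set u : ℂ := Complex.exp ((θ:ℂ)*Complex.I) with hu
  have hw : (1:ℂ) - (b:ℂ)*u = (r:ℂ)*Complex.exp (((-φ:ℝ):ℂ)*Complex.I) := by
    rw [hu, exp_real_form, exp_real_form, Real.cos_neg, Real.sin_neg]
    apply Complex.ext <;> simp [Complex.cos_ofReal_re, Complex.sin_ofReal_re] <;> linarith [hrc, hrs]
  have hw' : (1:ℂ) - (b:ℂ)*Complex.exp (((-θ:ℝ):ℂ)*Complex.I)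
      = (r:ℂ)*Complex.exp ((φ:ℂ)*Complex.I) := by
    rw [exp_real_form, exp_real_form, Real.cos_neg, Real.sin_neg]
    apply Complex.ext <;> simp [Complex.cos_ofReal_re, Complex.sin_ofReal_re] <;> linarith [hrc, hrs]
  have hexp : Complex.exp ((((k:ℝ)+1)*θ - φ : ℝ)*Complex.I)
      = Complex.exp (((θ+φ : ℝ))*Complex.I) := by
    have harg : (((k:ℝ)+1)*θ - φ : ℝ) = (θ+φ) + 2*π*m := by linarith [hg]
    rw [harg]
    rw [show ((((θ+φ) + 2*π*(m:ℝ)):ℝ):ℂ)*Complex.I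
        = ((θ+φ:ℝ):ℂ)*Complex.I + (m:ℂ)*(2*(π:ℂ)*Complex.I) by push_cast; ring]
    rw [Complex.exp_add, Complex.exp_int_mul_two_pi_mul_I, mul_one]
  have e1 : u^(k+1) = Complex.exp ((((k:ℝ)+1)*θ : ℝ)*Complex.I) := by
    rw [hu, ← Complex.exp_nat_mul]
    congr 1
    push_cast
    ring
  have e2 : u^(k+1) * ((1:ℂ) - (b:ℂ)*u) = u - (b:ℂ) := by
    calc u^(k+1) * ((1:ℂ) - (b:ℂ)*u)
        = (r:ℂ) * (Complex.exp ((((k:ℝ)+1)*θ : ℝ)*Complex.I)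
            * Complex.exp (((-φ:ℝ):ℂ)*Complex.I)) := by rw [hw, e1]; ring
      _ = (r:ℂ) * Complex.exp ((((k:ℝ)+1)*θ - φ : ℝ)*Complex.I) := by
          rw [← Complex.exp_add]; congr 1; push_cast; ring
      _ = (r:ℂ) * Complex.exp (((θ+φ : ℝ))*Complex.I) := by rw [hexp]
      _ = u * ((r:ℂ)*Complex.exp ((φ:ℂ)*Complex.I)) := by
          rw [hu]
          rw [show Complex.exp ((θ:ℂ)*Complex.I) * ((r:ℂ)*Complex.exp ((φ:ℂ)*Complex.I))
              = (r:ℂ)*(Complex.exp ((θ:ℂ)*Complex.I)*Complex.exp ((φ:ℂ)*Complex.I)) by ring,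
            ← Complex.exp_add]
          congr 2
          push_cast
          ring
      _ = u * ((1:ℂ) - (b:ℂ)*Complex.exp (((-θ:ℝ):ℂ)*Complex.I)) := by rw [hw']
      _ = u - (b:ℂ) * (u * Complex.exp (((-θ:ℝ):ℂ)*Complex.I)) := by ring
      _ = u - (b:ℂ) := by
          rw [hu, ← Complex.exp_add]
          rw [show ((θ:ℂ)*Complex.I + ((-θ:ℝ):ℂ)*Complex.I) = 0 by push_cast; ring,
            Complex.exp_zero, mul_one]
  linear_combination -e2

open Polynomial in
lemma count_roots_aux {b : ℂ} (hb : b ≠ 0) (hbb : b^2 ≠ 1) (k : ℕ) (S : Finset ℂ)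
    (hS : ∀ z ∈ S, b*z^(k+2) - z^(k+1) + z - b = 0) : S.card ≤ k+2 := by
  set Q : Polynomial ℂ := C b * X^(k+2) - X^(k+1) + X - C b with hQ
  have heval : ∀ z : ℂ, Q.eval z = b*z^(k+2) - z^(k+1) + z - b := by
    intro z; simp [hQ]
  have hQ0 : Q ≠ 0 := by
    intro h
    have h2 := heval b⁻¹
    rw [h, Polynomial.eval_zero] at h2
    have e : b * b⁻¹^(k+2) = b⁻¹^(k+1) := by
      rw [pow_succ, ← mul_assoc, mul_comm b, mul_assoc, mul_inv_cancel₀ hb, mul_one]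
    rw [e] at h2
    have h3 : b⁻¹ = b := by linear_combination -h2
    apply hbb
    rw [pow_two]
    nth_rewrite 1 [← h3]
    rw [inv_mul_cancel₀ hb]
  have hdeg : Q.natDegree ≤ k+2 := by
    rw [hQ]
    refine le_trans (natDegree_sub_le _ _) (max_le ?_ (by simp))
    refine le_trans (natDegree_add_le _ _) (max_le ?_ (by simp))
    refine le_trans (natDegree_sub_le _ _) (max_le ?_ (by simp))
    exact le_trans (natDegree_C_mul_le _ _) (by simp)
  have hsub : S.val ⊆ Q.roots := by
    intro z hz
    rw [Polynomial.mem_roots hQ0]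
    have := hS z hz
    rw [Polynomial.IsRoot, heval]
    exact this
  exact le_trans (Polynomial.card_le_degree_of_subset_roots hsub) hdeg

lemma gmono_lemma {b : ℝ} (hb0 : 0 < b) (hb1 : b < 1) (k : ℕ)
    (hkL : 2*(b*(1+b)/(1-b)^2) < (k:ℝ)) :
    StrictMono (fun θ : ℝ => (k:ℝ)*θ - 2*arctan (b*Real.sin θ/(1-b*Real.cos θ))) := by
  intro x y hxy
  simp only []
  have hl := h_lip hb0 hb1 x y
  rw [abs_of_pos (by linarith : (0:ℝ) < y - x)] at hl
  have habs := abs_le.mp hl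
  have h5 : 0 < ((k:ℝ)-2*(b*(1+b)/(1-b)^2))*(y-x) := mul_pos (by linarith) (by linarith)
  nlinarith [habs.1, habs.2, h5]

lemma theta_exists {b : ℝ} (hb0 : 0 < b) (hb1 : b < 1) (k : ℕ)
    (hkL : 2*(b*(1+b)/(1-b)^2) < (k:ℝ)) (j : ℕ) (hj : j < k) :
    ∃ θ : ℝ, 0 ≤ θ ∧ θ < 2*π ∧
      (k:ℝ)*θ - 2*arctan (b*Real.sin θ/(1-b*Real.cos θ)) = 2*π*j := by
  set g : ℝ → ℝ := fun θ : ℝ => (k:ℝ)*θ - 2*arctan (b*Real.sin θ/(1-b*Real.cos θ)) with hg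
  have hdenne : ∀ θ : ℝ, 1 - b*Real.cos θ ≠ 0 := by
    intro θ
    have := Real.cos_le_one θ
    nlinarith
  have gcont : Continuous g := by
    apply Continuous.sub
    · exact continuous_const.mul continuous_id
    · apply Continuous.mul continuous_const
      apply Real.continuous_arctan.comp
      exact (continuous_const.mul Real.continuous_sin).div
        (continuous_const.sub (continuous_const.mul Real.continuous_cos)) hdenne
  have g0 : g 0 = 0 := by simp [hg]
  have g2π : g (2*π) = 2*π*k := by
    rw [hg]
    simp only []
    rw [Real.sin_two_pi]
    norm_num
    ring
  have h2π : (0:ℝ) ≤ 2*π := by positivity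
  have hmem : 2*π*(j:ℝ) ∈ Set.Icc (g 0) (g (2*π)) := by
    rw [g0, g2π]
    constructor
    · positivity
    · have : (j:ℝ) ≤ (k:ℝ) := by exact_mod_cast hj.le
      nlinarith [Real.pi_pos]
  obtain ⟨θ, hθmem, hθ⟩ := intermediate_value_Icc h2π gcont.continuousOn hmem
  refine ⟨θ, hθmem.1, ?_, hθ⟩
  rcases lt_or_eq_of_le hθmem.2 with h | h
  · exact h
  · exfalso
    rw [h, g2π] at hθ
    have hπ := Real.pi_pos
    have hkj : (k:ℝ) = (j:ℝ) := mul_left_cancel₀ (by positivity : (2*π:ℝ) ≠ 0) hθ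
    have : k = j := by exact_mod_cast hkj
    omega

lemma real_root_exists {b : ℝ} (hb0 : 0 < b) (hb1 : b < 1) (k : ℕ)
    (hck : 2/(b*(1-b)) < ((1+b)/(2*b))^(k+1)) :
    ∃ x : ℝ, 1 < x ∧ b*x^(k+2) - x^(k+1) + x - b = 0 := by
  set c : ℝ := (1+b)/(2*b) with hcdef
  have hc1 : 1 < c := by rw [hcdef, lt_div_iff₀ (by linarith)]; linarith
  set F : ℝ → ℝ := fun x => b*x^(k+2) - x^(k+1) + x - b with hFdef
  have hbc : b * c = (1+b)/2 := by rw [hcdef]; field_simp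
  have hFc : F c < 0 := by
    have h1 : F c = (c - b) - c^(k+1) * ((1-b)/2) := by
      rw [hFdef]
      simp only []
      rw [show c^(k+2) = c^(k+1)*c by ring, show b * (c^(k+1)*c) = c^(k+1) * (b*c) by ring, hbc]
      ring
    rw [h1]
    have h2 : (2/(b*(1-b))) * ((1-b)/2) < c^(k+1) * ((1-b)/2) :=
      mul_lt_mul_of_pos_right hck (by linarith)
    have h3 : (2/(b*(1-b))) * ((1-b)/2) = 1/b := by
      rw [div_mul_div_comm, div_eq_div_iff (by nlinarith : b*(1-b)*2 ≠ 0) hb0.ne']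
      ring
    have h4 : c < 1/b := by
      rw [hcdef, div_lt_div_iff₀ (by linarith) hb0]
      nlinarith
    linarith
  have hF2b : 0 < F (2/b) := by
    rw [hFdef]
    simp only []
    rw [show (2/b)^(k+2) = (2/b)^(k+1)*(2/b) by ring,
      show b * ((2/b)^(k+1)*(2/b)) = (2/b)^(k+1) * (b*(2/b)) by ring,
      show b*(2/b) = 2 by field_simp]
    have h5 : 0 < (2/b)^(k+1) := by positivity
    have h6 : b < 2/b := by rw [lt_div_iff₀ hb0]; nlinarith
    nlinarith
  have hc2b : c ≤ 2/b := by
    rw [hcdef, div_le_div_iff₀ (by linarith) hb0]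
    nlinarith
  have hFcont : ContinuousOn F (Set.Icc c (2/b)) := by
    apply Continuous.continuousOn
    rw [hFdef]
    fun_prop
  obtain ⟨x, hxmem, hFx⟩ := intermediate_value_Icc hc2b hFcont ⟨hFc.le, hF2b.le⟩
  exact ⟨x, lt_of_lt_of_le hc1 hxmem.1, hFx⟩

lemma exp_inj_Ico {θ1 θ2 : ℝ} (h1 : 0 ≤ θ1) (h2 : θ1 < 2*π) (h3 : 0 ≤ θ2) (h4 : θ2 < 2*π)
    (he : Complex.exp ((θ1:ℂ)*Complex.I) = Complex.exp ((θ2:ℂ)*Complex.I)) : θ1 = θ2 := by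
  obtain ⟨n, hn⟩ := Complex.exp_eq_exp_iff_exists_int.mp he
  have him := congrArg Complex.im hn
  simp [Complex.mul_im] at him
  -- him : θ1 = θ2 + n * (2*π)  (hopefully)
  have hπ := Real.pi_pos
  have hn0 : n = 0 := by
    rcases lt_trichotomy n 0 with h | h | h
    · exfalso
      have : (n:ℝ) ≤ -1 := by exact_mod_cast (by omega : n ≤ -1)
      nlinarith
    · exact h
    · exfalso
      have : (1:ℝ) ≤ (n:ℝ) := by exact_mod_cast h
      nlinarith
  rw [hn0] at him
  simpa using him

lemma uniq_root {b : ℝ} (hb0 : 0 < b) (hb1 : b < 1) (k : ℕ)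
    (hkL : 2*(b*(1+b)/(1-b)^2) < (k:ℝ)) (x : ℝ) (hx1 : 1 < x)
    (hx0 : b*x^(k+2) - x^(k+1) + x - b = 0) (w : ℂ)
    (hw0 : (b:ℂ)*w^(k+2) - w^(k+1) + w - (b:ℂ) = 0) (hwabs : 1 < ‖w‖) :
    w = (x:ℂ) := by
  by_contra hne
  -- choose the angles
  have hθex := theta_exists hb0 hb1 k hkL
  classical
  set Θ : ℕ → ℝ := fun j => if h : j < k then (hθex j h).choose else 0 with hΘ
  have hΘprop : ∀ j, j < k → 0 ≤ Θ j ∧ Θ j < 2*π ∧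
      (k:ℝ)*(Θ j) - 2*arctan (b*Real.sin (Θ j)/(1-b*Real.cos (Θ j))) = 2*π*j := by
    intro j hj
    rw [hΘ]
    simp only [dif_pos hj]
    exact (hθex j hj).choose_spec
  set T : Finset ℂ := (Finset.range k).image (fun j => Complex.exp ((Θ j : ℂ)*Complex.I)) with hT
  have hTcard : T.card = k := by
    rw [hT, Finset.card_image_of_injOn, Finset.card_range]
    intro j1 hj1 j2 hj2 he
    simp only [Finset.mem_coe, Finset.mem_range] at hj1 hj2
    obtain ⟨ha1, ha2, ha3⟩ := hΘprop j1 hj1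
    obtain ⟨hb1', hb2, hb3⟩ := hΘprop j2 hj2
    have := exp_inj_Ico ha1 ha2 hb1' hb2 he
    rw [this] at ha3
    have : 2*π*(j1:ℝ) = 2*π*(j2:ℝ) := by rw [← ha3, ← hb3]
    have hπ := Real.pi_pos
    have : (j1:ℝ) = (j2:ℝ) := mul_left_cancel₀ (by positivity : (2*π:ℝ) ≠ 0) this
    exact_mod_cast this
  have hTabs : ∀ z ∈ T, ‖z‖ = 1 := by
    intro z hz
    rw [hT, Finset.mem_image] at hz
    obtain ⟨j, _, rfl⟩ := hz
    exact Complex.norm_exp_ofReal_mul_I (Θ j)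
  have hxC : ‖(x:ℂ)‖ = x := by
    rw [Complex.norm_real, Real.norm_eq_abs, abs_of_pos (by linarith)]
  have hxinvabs : ‖(x:ℂ)⁻¹‖ < 1 := by
    rw [norm_inv, hxC]
    rw [inv_lt_one_iff₀]
    right; exact hx1
  -- basic facts
  have hy0 : (b:ℂ)*(x:ℂ)^(k+2) - (x:ℂ)^(k+1) + (x:ℂ) - (b:ℂ) = 0 := by exact_mod_cast hx0
  have hyne : (x:ℂ) ≠ 0 := by
    intro h
    rw [h] at hxC
    simp at hxC
    linarith
  have hinv0 : (b:ℂ)*((x:ℂ)⁻¹)^(k+2) - ((x:ℂ)⁻¹)^(k+1) + (x:ℂ)⁻¹ - (b:ℂ) = 0 := by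
    have hmul : (x:ℂ)^(k+2) * ((b:ℂ)*((x:ℂ)⁻¹)^(k+2) - ((x:ℂ)⁻¹)^(k+1) + (x:ℂ)⁻¹ - (b:ℂ))
        = -((b:ℂ)*(x:ℂ)^(k+2) - (x:ℂ)^(k+1) + (x:ℂ) - (b:ℂ)) := by
      have e : ∀ n : ℕ, (x:ℂ)^n * ((x:ℂ)⁻¹)^n = 1 := fun n => by
        rw [← mul_pow, mul_inv_cancel₀ hyne, one_pow]
      linear_combination (b:ℂ) * e (k+2) - (x:ℂ) * e (k+1) + (x:ℂ)^(k+1) * e 1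
    rw [hy0, neg_zero] at hmul
    rcases mul_eq_zero.mp hmul with h | h
    · exact absurd h (pow_ne_zero _ hyne)
    · exact h
  -- distinctness
  have habsx : 1 < ‖(x:ℂ)‖ := by rw [hxC]; exact hx1
  have hne2 : w ≠ (x:ℂ)⁻¹ := by
    intro h
    rw [h] at hwabs
    linarith
  have hnexinv : (x:ℂ) ≠ (x:ℂ)⁻¹ := by
    intro h
    rw [← h] at hxinvabs
    linarith
  have hwT : w ∉ T := by
    intro h
    have := hTabs _ h
    linarith
  have hxTm : (x:ℂ) ∉ T := by
    intro h
    have := hTabs _ h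
    linarith
  have hinvT : (x:ℂ)⁻¹ ∉ T := by
    intro h
    have := hTabs _ h
    linarith
  -- the finset of k+3 roots
  set S : Finset ℂ := insert w (insert (x:ℂ) (insert ((x:ℂ)⁻¹) T)) with hS
  have hcard : S.card = k+3 := by
    rw [hS]
    rw [Finset.card_insert_of_notMem, Finset.card_insert_of_notMem,
      Finset.card_insert_of_notMem hinvT, hTcard]
    · simp only [Finset.mem_insert]
      push_neg
      exact ⟨hnexinv, hxTm⟩
    · simp only [Finset.mem_insert]
      push_neg
      exact ⟨hne, hne2, hwT⟩
  have hroots : ∀ z ∈ S, (b:ℂ)*z^(k+2) - z^(k+1) + z - (b:ℂ) = 0 := by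
    intro z hz
    rw [hS] at hz
    simp only [Finset.mem_insert] at hz
    rcases hz with rfl | rfl | rfl | hz
    · exact hw0
    · exact hy0
    · exact hinv0
    · rw [hT, Finset.mem_image] at hz
      obtain ⟨j, hj, rfl⟩ := hz
      rw [Finset.mem_range] at hj
      obtain ⟨h1, h2, h3⟩ := hΘprop j hj
      apply circle_root hb0 hb1 k (Θ j) (j:ℤ)
      rw [h3]
      push_cast
      ring
  have hbC : (b:ℂ) ≠ 0 := by
    simp only [ne_eq, Complex.ofReal_eq_zero]
    exact hb0.ne'
  have hbb : (b:ℂ)^2 ≠ 1 := by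
    intro h
    have : (b:ℝ)^2 = 1 := by exact_mod_cast h
    nlinarith
  have := count_roots_aux hbC hbb k S hroots
  omega
end Auxiliary

/-- For `0 < p < 1/2` there exists `K` such that for every `k ≥ K`, the equation
`((1+t)/(1-t))^{k+1} = (1-2p+t)/(1-2p-t)` has exactly one complex solution `t` with
positive real part (and `t ≠ 1`, `t ≠ 1-2p`); moreover this solution is real and
lies in `(0, 1)`. -/
theorem strong_unique_root (p : ℝ) (hp0 : 0 < p) (hp : p < 1 / 2) :
    ∃ K : ℕ, ∀ k : ℕ, K ≤ k →
      ∃ tk : ℝ, 0 < tk ∧ tk < 1 ∧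
        ∀ t : ℂ,
          (0 < t.re ∧ t ≠ 1 ∧ t ≠ 1 - 2 * (p : ℂ) ∧
            ((1 + t) / (1 - t)) ^ (k + 1) = (1 - 2 * (p : ℂ) + t) / (1 - 2 * (p : ℂ) - t))
          ↔ t = (tk : ℂ) := by
  have hq : (0:ℝ) < 1 - p := by linarith
  obtain ⟨b, hbp⟩ : ∃ b : ℝ, b = p / (1 - p) := ⟨_, rfl⟩
  have hb0 : 0 < b := by rw [hbp]; exact div_pos hp0 hq
  have hb1 : b < 1 := by rw [hbp, div_lt_one hq]; linarith
  have hbp' : b * (1 - p) = p := by rw [hbp]; field_simp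
  have hc1 : 1 < (1+b)/(2*b) := by rw [lt_div_iff₀ (by linarith)]; linarith
  obtain ⟨N, hN⟩ := pow_unbounded_of_one_lt (2/(b*(1-b))) hc1
  refine ⟨max (⌈2*(b*(1+b)/(1-b)^2)⌉₊ + 1) N, ?_⟩
  intro k hk
  have hkL : 2*(b*(1+b)/(1-b)^2) < (k:ℝ) := by
    have h1 : (⌈2*(b*(1+b)/(1-b)^2)⌉₊ + 1 : ℕ) ≤ k := le_trans (le_max_left _ _) hk
    have h2 : 2*(b*(1+b)/(1-b)^2) ≤ (⌈2*(b*(1+b)/(1-b)^2)⌉₊ : ℝ) := Nat.le_ceil _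
    have h3 : ((⌈2*(b*(1+b)/(1-b)^2)⌉₊ + 1 : ℕ) : ℝ) ≤ (k:ℝ) := by exact_mod_cast h1
    push_cast at h3
    linarith
  have hkN : N ≤ k := le_trans (le_max_right _ _) hk
  have hck : 2/(b*(1-b)) < ((1+b)/(2*b))^(k+1) :=
    lt_of_lt_of_le hN (pow_le_pow_right₀ hc1.le (by omega))
  obtain ⟨x, hx1, hx0⟩ := real_root_exists hb0 hb1 k hck
  -- x is not 1/b
  have hbx1 : 1 - b*x ≠ 0 := by
    intro h
    have hbx : b*x = 1 := by linarith
    have hxb : x = b := by linear_combination hx0 - x^(k+1)*hbx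
    linarith
  -- basic tk facts
  have hxp1 : (0:ℝ) < x + 1 := by linarith
  have htk0 : 0 < (x-1)/(x+1) := div_pos (by linarith) hxp1
  have htk1 : (x-1)/(x+1) < 1 := by rw [div_lt_one hxp1]; linarith
  -- tk ≠ 1 - 2p
  have htka : (x-1)/(x+1) ≠ 1 - 2*p := by
    intro h
    apply hbx1
    have h2 : x - 1 = (1 - 2*p)*(x+1) := by
      rw [div_eq_iff hxp1.ne'] at h
      linarith [h]
    -- p*x = 1 - p
    have h3 : p*x = 1 - p := by linarith [h2]
    -- b*x = 1
    have h4 : (b*x - 1)*p = 0 := by linear_combination b*h3 + hbp'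
    have h5 : b*x = 1 := by
      rcases mul_eq_zero.mp h4 with h' | h'
      · linarith
      · exact absurd h' hp0.ne'
    linarith
  refine ⟨(x-1)/(x+1), htk0, htk1, ?_⟩
  intro t
  have hxC1 : ((x:ℂ) + 1) ≠ 0 := by
    intro h
    have : (x:ℝ) + 1 = 0 := by exact_mod_cast congrArg Complex.re h
    linarith
  constructor
  · rintro ⟨hre, ht1, hta, heq⟩
    have h1t : (1:ℂ) - t ≠ 0 := sub_ne_zero_of_ne (Ne.symm ht1)
    have hat : (1:ℂ) - 2*(p:ℂ) - t ≠ 0 := by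
      intro h
      exact hta (sub_eq_zero.mp h).symm
    have hp1C : (1:ℂ) - (p:ℂ) ≠ 0 := by
      intro h
      have : (1:ℝ) - p = 0 := by exact_mod_cast congrArg Complex.re h
      linarith
    have hbpC : (b:ℂ) * (1 - (p:ℂ)) = (p:ℂ) := by exact_mod_cast hbp'
    set u : ℂ := (1+t)/(1-t) with hu
    have habs : 1 < ‖u‖ := by
      have h4 : Complex.normSq (1+t) - Complex.normSq (1-t) = 4*t.re := by
        simp [Complex.normSq_apply]
        ring
      have h5 : ‖1-t‖ < ‖1+t‖ := by
        rw [Complex.norm_def, Complex.norm_def]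
        apply Real.sqrt_lt_sqrt (Complex.normSq_nonneg _)
        linarith
      have habs0 : 0 < ‖1-t‖ := norm_pos_iff.mpr h1t
      rw [hu, norm_div, one_lt_div habs0]
      exact h5
    have hE : ((1:ℂ)-(p:ℂ))*(1-t) ≠ 0 := mul_ne_zero hp1C h1t
    have hA : (1:ℂ) - (b:ℂ)*u = ((1 - 2*(p:ℂ)) - t)/(((1:ℂ)-(p:ℂ))*(1-t)) := by
      rw [hu, eq_div_iff hE, sub_mul]
      have he1 : (b:ℂ)*((1+t)/(1-t)) * (((1:ℂ)-(p:ℂ))*(1-t)) = (b:ℂ)*(1+t)*((1:ℂ)-(p:ℂ)) := by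
        field_simp
      rw [he1]
      linear_combination -(1+t)*hbpC
    have hB : u - (b:ℂ) = ((1 - 2*(p:ℂ)) + t)/(((1:ℂ)-(p:ℂ))*(1-t)) := by
      rw [hu, eq_div_iff hE, sub_mul]
      have he1 : (1+t)/(1-t) * (((1:ℂ)-(p:ℂ))*(1-t)) = (1+t)*((1:ℂ)-(p:ℂ)) := by
        field_simp
      rw [he1]
      linear_combination (t-1)*hbpC
    have hEqu : u^(k+1) * ((1:ℂ) - (b:ℂ)*u) = u - (b:ℂ) := by
      rw [heq, hA, hB, div_mul_div_comm, div_eq_div_iff (mul_ne_zero hat hE) hE]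
      ring
    have heval : (b:ℂ)*u^(k+2) - u^(k+1) + u - (b:ℂ) = 0 := by linear_combination -hEqu
    have hux : u = (x:ℂ) := uniq_root hb0 hb1 k hkL x hx1 hx0 u heval habs
    have hut : u * (1 - t) = 1 + t := by
      rw [hu]
      exact div_mul_cancel₀ _ h1t
    rw [hux] at hut
    have ht2 : t * ((x:ℂ)+1) = (x:ℂ) - 1 := by linear_combination -hut
    rw [show ((((x-1)/(x+1)):ℝ):ℂ) = ((x:ℂ)-1)/((x:ℂ)+1) by push_cast; ring]
    rw [eq_div_iff hxC1]
    exact ht2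
  · rintro rfl
    have hd : (0:ℝ) < 1 - (x-1)/(x+1) := by linarith
    refine ⟨?_, ?_, ?_, ?_⟩
    · rw [Complex.ofReal_re]; exact htk0
    · intro h
      rw [Complex.ofReal_eq_one] at h
      exact absurd h (ne_of_lt htk1)
    · intro h
      apply htka
      exact_mod_cast h
    · -- the equation
      have hx0p : p*x^(k+2) - (1-p)*x^(k+1) + (1-p)*x - p = 0 := by
        linear_combination (1-p)*hx0 - (x^(k+2)-1)*hbp'
      have hden : (1-2*p) - (x-1)/(x+1) ≠ 0 := sub_ne_zero_of_ne (Ne.symm htka)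
      have eA : (1-2*p) + (x-1)/(x+1) = (2*((1-p)*x - p))/(x+1) := by
        rw [eq_div_iff hxp1.ne', add_mul, div_mul_cancel₀ _ hxp1.ne']
        ring
      have eB : (1-2*p) - (x-1)/(x+1) = (2*((1-p) - p*x))/(x+1) := by
        rw [eq_div_iff hxp1.ne', sub_mul, div_mul_cancel₀ _ hxp1.ne']
        ring
      have h2N : (2*((1-p) - p*x)) ≠ 0 := by
        intro h
        apply hden
        rw [eB, h, zero_div]
      have hreal : x^(k+1) = ((1-2*p) + (x-1)/(x+1))/((1-2*p) - (x-1)/(x+1)) := by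
        rw [eA, eB, div_div_div_cancel_right₀ hxp1.ne', eq_div_iff h2N]
        linear_combination (-2)*hx0p
      have htkx : (1 + (x-1)/(x+1))/(1 - (x-1)/(x+1)) = x := by
        rw [div_eq_iff hd.ne']
        field_simp
        ring
      have e1 : ((1:ℂ) + (((x-1)/(x+1):ℝ):ℂ))/((1:ℂ) - (((x-1)/(x+1):ℝ):ℂ)) = (x:ℂ) := by
        exact_mod_cast congrArg (fun r : ℝ => (r:ℂ)) htkx
      rw [e1]
      exact_mod_cast hreal
end
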